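/- Let 1 < p < 2, let δ ∈ [0,1) and let θ ∈ [0,1) satisfy θ^p ≤ δ. Then (1−δ)^{p−1}(δ−θ^p) ≤ (1−θ)^p. -/

import Mathlib

open Real

/-- **Key elementary inequality** from the proof of the algebraic lemma: for `1 < p < 2`,
`δ ∈ [0,1)` and `θ ∈ [0,1)` with `θ^p ≤ δ`, one has `(1-δ)^{p-1}(δ-θ^p) ≤ (1-θ)^p`. -/
theorem elementary_inequality_delta_theta (p δ θ : ℝ) (hp1 : 1 < p) (hp2 : p < 2)
    (hδ0 : 0 ≤ δ) (hδ1 : δ < 1) (hθ0 : 0 ≤ θ) (hθ1 : θ < 1) (h : θ ^ p ≤ δ) :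
    (1 - δ) ^ (p - 1) * (δ - θ ^ p) ≤ (1 - θ) ^ p := by
  have hp0 : (0:ℝ) < p := by linarith
  set a : ℝ := 1 - δ with ha_def
  set b : ℝ := δ - θ ^ p with hb_def
  have ha : 0 ≤ a := by simp [ha_def]; linarith
  have hb : 0 ≤ b := by simp [hb_def]; linarith
  -- Bernoulli: 1 + p*(θ-1) ≤ θ^p
  have hbern : 1 + p * (θ - 1) ≤ θ ^ p := by
    have := one_add_mul_self_le_rpow_one_add (s := θ - 1) (by linarith) (le_of_lt hp1)
    simpa using this
  have hab : a + b = 1 - θ ^ p := by simp [ha_def, hb_def]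
  -- weighted AM-GM
  have hw : (p - 1) / p + 1 / p = 1 := by field_simp; ring
  have hamgm := Real.geom_mean_le_arith_mean2_weighted
    (w₁ := (p - 1) / p) (w₂ := 1 / p) (p₁ := a) (p₂ := b)
    (div_nonneg (by linarith) hp0.le) (by positivity) ha hb hw
  have hmean : (p - 1) / p * a + 1 / p * b ≤ 1 - θ := by
    rw [div_mul_eq_mul_div, one_div, inv_mul_eq_div, ← add_div, div_le_iff₀ hp0]
    nlinarith
  have hX : a ^ ((p - 1) / p) * b ^ (1 / p) ≤ 1 - θ := hamgm.trans hmean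
  have hXnn : 0 ≤ a ^ ((p - 1) / p) * b ^ (1 / p) := by positivity
  have hpow := Real.rpow_le_rpow hXnn hX hp0.le
  calc a ^ (p - 1) * b = (a ^ ((p - 1) / p) * b ^ (1 / p)) ^ p := by
        rw [Real.mul_rpow (by positivity) (by positivity)]
        rw [← Real.rpow_mul ha, ← Real.rpow_mul hb]
        rw [div_mul_cancel₀ _ hp0.ne', one_div_mul_cancel hp0.ne', Real.rpow_one]
    _ ≤ (1 - θ) ^ p := hpow
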